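/- Let p, q > 1 with 1/p + 1/q = 1, and define h(t,u) = 1/(1-e^{-t}) - e^{-(u+1)pt}/(1-e^{-pt}) - e^{uqt}/(1-e^{-qt}). For fixed u ≥ 0, the mixed partial ∂²h/∂t∂u is negative for all t > 0; equivalently, ∂h/∂t (t,u) is strictly decreasing in u on [0,∞) for each fixed t > 0. -/

import Mathlib

open Real Set

/-- h(t,u) = 1/(1-e^{-t}) - e^{-(u+1)pt}/(1-e^{-pt}) - e^{uqt}/(1-e^{-qt}) -/
noncomputable def h (p q t u : ℝ) : ℝ :=
  1 / (1 - exp (-t)) - exp (-((u + 1) * p * t)) / (1 - exp (-(p * t)))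
    - exp (u * q * t) / (1 - exp (-(q * t)))

/-- Explicit formula for ∂h/∂t. -/
noncomputable def F (p q t u : ℝ) : ℝ :=
  -exp (-t) / (1 - exp (-t)) ^ 2
  - (exp (-((u + 1) * p * t)) * (-((u + 1) * p)) * (1 - exp (-(p * t)))
      - exp (-((u + 1) * p * t)) * (exp (-(p * t)) * p)) / (1 - exp (-(p * t))) ^ 2
  - (exp (u * q * t) * (u * q) * (1 - exp (-(q * t)))
      - exp (u * q * t) * (exp (-(q * t)) * q)) / (1 - exp (-(q * t))) ^ 2

/-- Explicit formula for ∂²h/∂t∂u. -/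
noncomputable def G (p q t u : ℝ) : ℝ :=
  -(p * exp (-((u + 1) * p * t)) *
      (((u + 1) * p * t - 1) * (1 - exp (-(p * t))) + p * t * exp (-(p * t)))) /
    (1 - exp (-(p * t))) ^ 2
  - q * exp (u * q * t) *
      ((1 + u * q * t) * (1 - exp (-(q * t))) - q * t * exp (-(q * t))) /
    (1 - exp (-(q * t))) ^ 2

lemma one_sub_exp_neg_pos {x : ℝ} (hx : 0 < x) : 0 < 1 - exp (-x) := by
  have : exp (-x) < 1 := exp_lt_one_iff.mpr (by linarith)
  linarith

lemma hasDerivAt_h_t (p q t u : ℝ) (hp : 0 < p) (hq : 0 < q) (ht : 0 < t) :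
    HasDerivAt (fun s : ℝ => h p q s u) (F p q t u) t := by
  have hpt : 0 < p * t := mul_pos hp ht
  have hqt : 0 < q * t := mul_pos hq ht
  have h1 : (1 : ℝ) - exp (-t) ≠ 0 := (one_sub_exp_neg_pos ht).ne'
  have h2 : (1 : ℝ) - exp (-(p * t)) ≠ 0 := (one_sub_exp_neg_pos hpt).ne'
  have h3 : (1 : ℝ) - exp (-(q * t)) ≠ 0 := (one_sub_exp_neg_pos hqt).ne'
  -- denominator derivatives
  have e1 : HasDerivAt (fun s : ℝ => exp (-s)) (exp (-t) * (-1)) t :=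
    (Real.hasDerivAt_exp (-t)).comp t ((hasDerivAt_id t).neg)
  have d1 : HasDerivAt (fun s : ℝ => 1 - exp (-s)) (0 - exp (-t) * (-1)) t :=
    (hasDerivAt_const t (1 : ℝ)).sub e1
  have e2 : HasDerivAt (fun s : ℝ => exp (-(p * s))) (exp (-(p * t)) * (-(p * 1))) t :=
    (Real.hasDerivAt_exp (-(p * t))).comp (h₂ := exp) t (((hasDerivAt_id t).const_mul p).neg)
  have d2 : HasDerivAt (fun s : ℝ => 1 - exp (-(p * s))) (0 - exp (-(p * t)) * (-(p * 1))) t :=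
    (hasDerivAt_const t (1 : ℝ)).sub e2
  have e3 : HasDerivAt (fun s : ℝ => exp (-(q * s))) (exp (-(q * t)) * (-(q * 1))) t :=
    (Real.hasDerivAt_exp (-(q * t))).comp (h₂ := exp) t (((hasDerivAt_id t).const_mul q).neg)
  have d3 : HasDerivAt (fun s : ℝ => 1 - exp (-(q * s))) (0 - exp (-(q * t)) * (-(q * 1))) t :=
    (hasDerivAt_const t (1 : ℝ)).sub e3
  -- numerator derivatives
  have n2 : HasDerivAt (fun s : ℝ => exp (-((u + 1) * p * s)))
      (exp (-((u + 1) * p * t)) * (-((u + 1) * p * 1))) t :=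
    (Real.hasDerivAt_exp (-((u + 1) * p * t))).comp (h₂ := exp) t
      (((hasDerivAt_id t).const_mul ((u + 1) * p)).neg)
  have n3 : HasDerivAt (fun s : ℝ => exp (u * q * s)) (exp (u * q * t) * (u * q * 1)) t :=
    (Real.hasDerivAt_exp (u * q * t)).comp t ((hasDerivAt_id t).const_mul (u * q))
  have t1 := (hasDerivAt_const t (1 : ℝ)).div d1 h1
  have t2 := n2.div d2 h2
  have t3 := n3.div d3 h3
  have total := (t1.sub t2).sub t3
  refine total.congr_deriv ?_
  unfold F
  field_simp
  ring

lemma hasDerivAt_F_u (p q t u : ℝ) :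
    HasDerivAt (fun v : ℝ => F p q t v) (G p q t u) u := by
  -- derivative of v ↦ exp (-((v+1)*p*t))
  have i2 : HasDerivAt (fun v : ℝ => -((v + 1) * p * t)) (-(1 * p * t)) u :=
    ((((hasDerivAt_id u).add_const 1).mul_const p).mul_const t).neg
  have ee2 : HasDerivAt (fun v : ℝ => exp (-((v + 1) * p * t)))
      (exp (-((u + 1) * p * t)) * (-(1 * p * t))) u :=
    (Real.hasDerivAt_exp (-((u + 1) * p * t))).comp (h₂ := exp) u i2
  -- derivative of v ↦ exp (v*q*t)
  have i3 : HasDerivAt (fun v : ℝ => v * q * t) (1 * q * t) u :=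
    (((hasDerivAt_id u).mul_const q).mul_const t)
  have ee3 : HasDerivAt (fun v : ℝ => exp (v * q * t)) (exp (u * q * t) * (1 * q * t)) u :=
    (Real.hasDerivAt_exp (u * q * t)).comp (h₂ := exp) u i3
  -- linear factors
  have l2 : HasDerivAt (fun v : ℝ => -((v + 1) * p)) (-(1 * p)) u :=
    (((hasDerivAt_id u).add_const 1).mul_const p).neg
  have l3 : HasDerivAt (fun v : ℝ => v * q) (1 * q) u := (hasDerivAt_id u).mul_const q
  -- assemble numerators
  have m2 := ((ee2.mul l2).mul_const (1 - exp (-(p * t)))).sub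
      (ee2.mul_const (exp (-(p * t)) * p))
  have m3 := ((ee3.mul l3).mul_const (1 - exp (-(q * t)))).sub
      (ee3.mul_const (exp (-(q * t)) * q))
  have total := ((hasDerivAt_const u (-exp (-t) / (1 - exp (-t)) ^ 2)).sub
      (m2.div_const ((1 - exp (-(p * t))) ^ 2))).sub
      (m3.div_const ((1 - exp (-(q * t))) ^ 2))
  refine total.congr_deriv ?_
  unfold G
  ring

lemma G_neg (p q t u : ℝ) (hp : 1 < p) (hq : 1 < q) (ht : 0 < t) (hu : 0 ≤ u) :
    G p q t u < 0 := by
  have hp0 : (0 : ℝ) < p := by linarith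
  have hq0 : (0 : ℝ) < q := by linarith
  have hx : 0 < p * t := mul_pos hp0 ht
  have hy : 0 < q * t := mul_pos hq0 ht
  have hEp : 0 < 1 - exp (-(p * t)) := one_sub_exp_neg_pos hx
  have hEq : 0 < 1 - exp (-(q * t)) := one_sub_exp_neg_pos hy
  have key1 : 1 - exp (-(p * t)) < p * t := by
    have := add_one_lt_exp (show -(p * t) ≠ 0 by linarith)
    linarith
  have key2 : q * t * exp (-(q * t)) < 1 - exp (-(q * t)) := by
    have h1 : (q * t + 1) * exp (-(q * t)) < exp (q * t) * exp (-(q * t)) :=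
      mul_lt_mul_of_pos_right (add_one_lt_exp hy.ne') (exp_pos _)
    rw [← exp_add] at h1
    simp only [add_neg_cancel, exp_zero] at h1
    linarith
  have B1 : 0 < ((u + 1) * p * t - 1) * (1 - exp (-(p * t))) + p * t * exp (-(p * t)) := by
    nlinarith [mul_nonneg (mul_nonneg hu hx.le) hEp.le]
  have B2 : 0 < (1 + u * q * t) * (1 - exp (-(q * t))) - q * t * exp (-(q * t)) := by
    nlinarith [mul_nonneg (mul_nonneg hu hy.le) hEq.le]
  have h1 : 0 < p * exp (-((u + 1) * p * t)) *
      (((u + 1) * p * t - 1) * (1 - exp (-(p * t))) + p * t * exp (-(p * t))) :=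
    mul_pos (mul_pos hp0 (exp_pos _)) B1
  have h2 : 0 < q * exp (u * q * t) *
      ((1 + u * q * t) * (1 - exp (-(q * t))) - q * t * exp (-(q * t))) :=
    mul_pos (mul_pos hq0 (exp_pos _)) B2
  have d1 : (0 : ℝ) < (1 - exp (-(p * t))) ^ 2 := by positivity
  have d2 : (0 : ℝ) < (1 - exp (-(q * t))) ^ 2 := by positivity
  have q1 := div_pos h1 d1
  have q2 := div_pos h2 d2
  unfold G
  rw [neg_div]
  linarith

theorem dht_strictAnti_in_u (p q : ℝ) (hp : 1 < p) (hq : 1 < q) (hpq : 1 / p + 1 / q = 1)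
    (t : ℝ) (ht : 0 < t) :
    StrictAntiOn (fun u : ℝ => deriv (fun s : ℝ => h p q s u) t) (Ici (0 : ℝ)) := by
  have hp0 : (0 : ℝ) < p := by linarith
  have hq0 : (0 : ℝ) < q := by linarith
  have hder : ∀ u : ℝ, deriv (fun s : ℝ => h p q s u) t = F p q t u := fun u =>
    (hasDerivAt_h_t p q t u hp0 hq0 ht).deriv
  have key : StrictAntiOn (fun u : ℝ => F p q t u) (Ici (0 : ℝ)) := by
    apply strictAntiOn_of_deriv_neg (convex_Ici 0)
    · exact (Differentiable.continuous fun u =>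
        (hasDerivAt_F_u p q t u).differentiableAt).continuousOn
    · intro x hx
      rw [interior_Ici] at hx
      rw [(hasDerivAt_F_u p q t x).deriv]
      exact G_neg p q t x hp hq ht (le_of_lt hx)
  intro a ha b hb hab
  simp only [hder]
  exact key ha hb hab
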